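/- Let X and S be positive integrable random variables on a probability space with 0 ≤ X ≤ S. Then 𝔼[X | σ(S)] = (𝔼[X]/𝔼[S])·S almost surely if and only if for every real t > 0, 𝔼[X·e^{−tS}]/𝔼[X] = 𝔼[S·e^{−tS}]/𝔼[S]. -/

import Mathlib

open MeasureTheory Set
open scoped NNReal ENNReal

-- continuity of weighted integral functional on C(K, ℝ)
lemma continuous_weighted_integral {Ω : Type*} [MeasurableSpace Ω] (μ : Measure Ω)
    {K : Type*} [TopologicalSpace K] [CompactSpace K] [MeasurableSpace K] [OpensMeasurableSpace K]
    {W : Ω → ℝ} (hW : Integrable W μ) (hWnn : ∀ ω, 0 ≤ W ω)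
    {φ : Ω → K} (hφ : Measurable φ) :
    Continuous (fun g : C(K, ℝ) => ∫ ω, W ω * g (φ ω) ∂μ) := by
  have hInt : ∀ g : C(K, ℝ), Integrable (fun ω => W ω * g (φ ω)) μ := by
    intro g
    have hb : ∃ C, ∀ ω, ‖g (φ ω)‖ ≤ C := ⟨‖g‖, fun ω => g.norm_coe_le_norm _⟩
    simpa [mul_comm] using
      hW.bdd_mul ((g.continuous.measurable.comp hφ).aestronglyMeasurable) (Filter.Eventually.of_forall hb.choose_spec)
  refine (LipschitzWith.of_dist_le_mul (K := (∫ ω, W ω ∂μ).toNNReal) ?_).continuous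
  intro g g'
  rw [Real.dist_eq, ← integral_sub (hInt g) (hInt g')]
  calc |∫ ω, (W ω * g (φ ω) - W ω * g' (φ ω)) ∂μ|
      ≤ ∫ ω, |W ω * g (φ ω) - W ω * g' (φ ω)| ∂μ := by
        simpa [Real.norm_eq_abs] using
          norm_integral_le_integral_norm (μ := μ) (fun ω => W ω * g (φ ω) - W ω * g' (φ ω))
    _ ≤ ∫ ω, W ω * dist g g' ∂μ := by
        refine integral_mono ((hInt g).sub (hInt g')).abs (hW.mul_const _) (fun ω => ?_)
        rw [← mul_sub, abs_mul, abs_of_nonneg (hWnn ω)]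
        refine mul_le_mul_of_nonneg_left ?_ (hWnn ω)
        calc |g (φ ω) - g' (φ ω)| = dist (g (φ ω)) (g' (φ ω)) := (Real.dist_eq _ _).symm
          _ ≤ dist g g' := ContinuousMap.dist_apply_le_dist _
    _ = ((∫ ω, W ω ∂μ).toNNReal : ℝ) * dist g g' := by
        rw [integral_mul_const, Real.coe_toNNReal _ (integral_nonneg hWnn)]

theorem condexp_linear_iff_laplace
    {Ω : Type*} [MeasurableSpace Ω] (μ : Measure Ω) [IsProbabilityMeasure μ]
    (X S : Ω → ℝ) (hXmeas : Measurable X) (hSmeas : Measurable S)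
    (hXpos : ∀ ω, 0 < X ω) (hSpos : ∀ ω, 0 < S ω) (hXS : ∀ ω, X ω ≤ S ω)
    (hXint : Integrable X μ) (hSint : Integrable S μ) :
    (μ[X | MeasurableSpace.comap S (borel ℝ)] =ᵐ[μ]
        fun ω => ((∫ ω, X ω ∂μ) / (∫ ω, S ω ∂μ)) * S ω) ↔
      (∀ t : ℝ, 0 < t →
        (∫ ω, X ω * Real.exp (-t * S ω) ∂μ) / (∫ ω, X ω ∂μ) =
          (∫ ω, S ω * Real.exp (-t * S ω) ∂μ) / (∫ ω, S ω ∂μ)) := by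
  have hm : MeasurableSpace.comap S (borel ℝ) ≤ _ := hSmeas.comap_le
  haveI : SigmaFinite (μ.trim hm) := inferInstance
  have hX0 : ∀ ω, 0 ≤ X ω := fun ω => (hXpos ω).le
  have hS0 : ∀ ω, 0 ≤ S ω := fun ω => (hSpos ω).le
  have hIX : 0 < ∫ ω, X ω ∂μ := by
    rw [integral_pos_iff_support_of_nonneg hX0 hXint]
    have : Function.support X = Set.univ := Set.eq_univ_of_forall fun ω => (hXpos ω).ne'
    simp [this]
  have hIS : 0 < ∫ ω, S ω ∂μ := by
    rw [integral_pos_iff_support_of_nonneg hS0 hSint]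
    have : Function.support S = Set.univ := Set.eq_univ_of_forall fun ω => (hSpos ω).ne'
    simp [this]
  set c : ℝ := (∫ ω, X ω ∂μ) / (∫ ω, S ω ∂μ) with hc_def
  have hc : 0 < c := div_pos hIX hIS
  have hSm : Measurable[MeasurableSpace.comap S (borel ℝ)] S := fun s hs => ⟨s, hs, rfl⟩
  constructor
  · -- forward direction
    intro h t ht
    set E : Ω → ℝ := fun ω => Real.exp (-t * S ω) with hE_def
    have hE_m : Measurable[MeasurableSpace.comap S (borel ℝ)] E :=
      (Real.measurable_exp.comp (measurable_const.mul measurable_id)).comp hSm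
    have hE_sm : StronglyMeasurable[MeasurableSpace.comap S (borel ℝ)] E := hE_m.stronglyMeasurable
    have hE0 : ∀ ω, 0 ≤ E ω := fun ω => (Real.exp_pos _).le
    have hE1 : ∀ ω, E ω ≤ 1 := fun ω => by
      rw [hE_def, ← Real.exp_zero]
      exact Real.exp_le_exp.mpr (by nlinarith [hSpos ω])
    have hEmeas : Measurable E := hE_m.mono hm le_rfl
    have hInt1 : Integrable (E * X) μ :=
      hXint.bdd_mul hEmeas.aestronglyMeasurable
        (Filter.Eventually.of_forall fun ω => (by rw [Real.norm_eq_abs, abs_of_nonneg (hE0 ω)]; exact hE1 ω : ‖E ω‖ ≤ 1))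
    have key : ∫ ω, E ω * X ω ∂μ = ∫ ω, E ω * (c * S ω) ∂μ := by
      calc ∫ ω, E ω * X ω ∂μ = ∫ ω, (μ[E * X|MeasurableSpace.comap S (borel ℝ)]) ω ∂μ := (integral_condExp hm).symm
        _ = ∫ ω, (E * μ[X|MeasurableSpace.comap S (borel ℝ)]) ω ∂μ :=
            integral_congr_ae (condExp_mul_of_stronglyMeasurable_left hE_sm hInt1 hXint)
        _ = ∫ ω, E ω * (c * S ω) ∂μ := by
            refine integral_congr_ae (h.mono fun ω hω => ?_)
            simp only [Pi.mul_apply, hω]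
    have key' : ∫ ω, X ω * E ω ∂μ = c * ∫ ω, S ω * E ω ∂μ := by
      rw [← integral_const_mul]
      rw [show (fun ω => X ω * E ω) = fun ω => E ω * X ω from funext fun ω => mul_comm _ _]
      rw [key]
      congr 1; funext ω; ring
    rw [div_eq_div_iff hIX.ne' hIS.ne']
    have hA : ∀ A : ℝ, (c * A) * (∫ ω, S ω ∂μ) = A * (∫ ω, X ω ∂μ) := by
      intro A
      rw [hc_def]
      field_simp
    rw [key']
    exact hA _
  · -- converse direction
    intro h
    have hcS0 : ∀ ω, 0 ≤ c * S ω := fun ω => mul_nonneg hc.le (hS0 ω)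
    have hcSint : Integrable (fun ω => c * S ω) μ := hSint.const_mul c
    have hexp1 : ∀ ω, Real.exp (-S ω) ≤ 1 := fun ω => by
      rw [← Real.exp_zero]
      exact Real.exp_le_exp.mpr (by linarith [hSpos ω])
    set φ : Ω → (Set.Icc (0:ℝ) 1) := fun ω =>
      ⟨Real.exp (-S ω), ⟨(Real.exp_pos _).le, hexp1 ω⟩⟩ with hφ_def
    have hφmeas : Measurable φ := (Real.measurable_exp.comp hSmeas.neg).subtype_mk
    have hφpow : ∀ (i : ℕ) (ω : Ω), ((φ ω : ℝ)) ^ i = Real.exp (-(i : ℝ) * S ω) := by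
      intro i ω
      show Real.exp (-S ω) ^ i = _
      rw [← Real.exp_nat_mul]
      congr 1
      ring
    have moments : ∀ i : ℕ,
        ∫ ω, X ω * ((φ ω : ℝ)) ^ i ∂μ = ∫ ω, (c * S ω) * ((φ ω : ℝ)) ^ i ∂μ := by
      intro i
      rcases Nat.eq_zero_or_pos i with hi | hi
      · subst hi
        simp only [pow_zero, mul_one]
        rw [integral_const_mul, hc_def, div_mul_cancel₀ _ hIS.ne']
      · have hcast : (0:ℝ) < (i:ℝ) := by exact_mod_cast hi
        have hdiv := h (i:ℝ) hcast
        rw [div_eq_div_iff hIX.ne' hIS.ne'] at hdiv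
        simp only [hφpow]
        rw [show (fun ω => (c * S ω) * Real.exp (-(i:ℝ) * S ω))
            = fun ω => c * (S ω * Real.exp (-(i:ℝ) * S ω)) from funext fun ω => by ring]
        rw [integral_const_mul, hc_def, div_mul_eq_mul_div, eq_div_iff hIS.ne',
          show (fun ω => X ω * Real.exp (-(i:ℝ) * S ω))
            = fun ω => X ω * Real.exp (-(i:ℝ) * S ω) from rfl]
        rw [hdiv]
        ring
    have hbdd : ∀ (i : ℕ) (ω : Ω), ‖((φ ω : ℝ)) ^ i‖ ≤ 1 := fun i ω => by
      rw [Real.norm_eq_abs, abs_pow, abs_of_nonneg (φ ω).2.1]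
      exact pow_le_one₀ (φ ω).2.1 (φ ω).2.2
    have hIntPow : ∀ (W : Ω → ℝ), Integrable W μ → ∀ i : ℕ,
        Integrable (fun ω => W ω * ((φ ω : ℝ)) ^ i) μ := by
      intro W hW i
      have hmeas : Measurable (fun ω => ((φ ω : ℝ)) ^ i) :=
        (measurable_subtype_coe.comp hφmeas).pow_const i
      simpa [mul_comm] using hW.bdd_mul hmeas.aestronglyMeasurable (Filter.Eventually.of_forall fun ω => hbdd i ω)
    have claim : ∀ g : C((Set.Icc (0:ℝ) 1), ℝ),
        ∫ ω, X ω * g (φ ω) ∂μ = ∫ ω, (c * S ω) * g (φ ω) ∂μ := by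
      have hclosed : IsClosed {g : C((Set.Icc (0:ℝ) 1), ℝ) |
          ∫ ω, X ω * g (φ ω) ∂μ = ∫ ω, (c * S ω) * g (φ ω) ∂μ} :=
        isClosed_eq (continuous_weighted_integral μ hXint hX0 hφmeas)
          (continuous_weighted_integral μ hcSint hcS0 hφmeas)
      have hpoly : (polynomialFunctions (Set.Icc (0:ℝ) 1) : Set C((Set.Icc (0:ℝ) 1), ℝ))
          ⊆ {g : C((Set.Icc (0:ℝ) 1), ℝ) |
            ∫ ω, X ω * g (φ ω) ∂μ = ∫ ω, (c * S ω) * g (φ ω) ∂μ} := by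
        intro g hg
        rw [polynomialFunctions_coe] at hg
        obtain ⟨p, rfl⟩ := hg
        have hkey : ∀ (W : Ω → ℝ), Integrable W μ →
            ∫ ω, W ω * (Polynomial.toContinuousMapOnAlgHom (Set.Icc (0:ℝ) 1) p) (φ ω) ∂μ
              = ∑ i ∈ Finset.range (p.natDegree + 1),
                  p.coeff i * ∫ ω, W ω * ((φ ω : ℝ)) ^ i ∂μ := by
          intro W hW
          calc ∫ ω, W ω * (Polynomial.toContinuousMapOnAlgHom (Set.Icc (0:ℝ) 1) p) (φ ω) ∂μ
              = ∫ ω, ∑ i ∈ Finset.range (p.natDegree + 1),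
                  p.coeff i * (W ω * ((φ ω : ℝ)) ^ i) ∂μ := by
                congr 1
                funext ω
                rw [Polynomial.toContinuousMapOnAlgHom_apply,
                  Polynomial.toContinuousMapOn_apply, Polynomial.toContinuousMap_apply,
                  Polynomial.eval_eq_sum_range, Finset.mul_sum]
                exact Finset.sum_congr rfl fun i _ => by ring
            _ = ∑ i ∈ Finset.range (p.natDegree + 1),
                  ∫ ω, p.coeff i * (W ω * ((φ ω : ℝ)) ^ i) ∂μ :=
                integral_finset_sum _ (fun i _ => (hIntPow W hW i).const_mul _)
            _ = ∑ i ∈ Finset.range (p.natDegree + 1),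
                  p.coeff i * ∫ ω, W ω * ((φ ω : ℝ)) ^ i ∂μ :=
                Finset.sum_congr rfl fun i _ => integral_const_mul _ _
        show ∫ ω, X ω * _ ∂μ = ∫ ω, (c * S ω) * _ ∂μ
        rw [hkey X hXint, hkey _ hcSint]
        exact Finset.sum_congr rfl fun i _ => by rw [moments i]
      intro g
      have hgmem : g ∈ closure
          (polynomialFunctions (Set.Icc (0:ℝ) 1) : Set C((Set.Icc (0:ℝ) 1), ℝ)) := by
        rw [← Subalgebra.topologicalClosure_coe, polynomialFunctions_closure_eq_top]
        simp
      exact closure_minimal hpoly hclosed hgmem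
    have hX0ae : 0 ≤ᵐ[μ] X := Filter.Eventually.of_forall hX0
    have hcS0ae : 0 ≤ᵐ[μ] (fun ω => c * S ω) := Filter.Eventually.of_forall hcS0
    haveI hfin1 : IsFiniteMeasure (μ.withDensity (fun ω => ENNReal.ofReal (X ω))) := ⟨by
      rw [withDensity_apply _ MeasurableSet.univ, setLIntegral_univ,
        ← ofReal_integral_eq_lintegral_ofReal hXint hX0ae]
      exact ENNReal.ofReal_lt_top⟩
    haveI hfin2 : IsFiniteMeasure (μ.withDensity (fun ω => ENNReal.ofReal (c * S ω))) := ⟨by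
      rw [withDensity_apply _ MeasurableSet.univ, setLIntegral_univ,
        ← ofReal_integral_eq_lintegral_ofReal hcSint hcS0ae]
      exact ENNReal.ofReal_lt_top⟩
    have hρ : (μ.withDensity (fun ω => ENNReal.ofReal (X ω))).map φ
        = (μ.withDensity (fun ω => ENNReal.ofReal (c * S ω))).map φ := by
      apply ext_of_forall_lintegral_eq_of_IsFiniteMeasure
      intro f
      have hside : ∀ (W : Ω → ℝ), (∀ ω, 0 ≤ W ω) → Measurable W →
          ∫ x, ((f x : ℝ)) ∂((μ.withDensity fun ω => ENNReal.ofReal (W ω)).map φ)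
            = ∫ ω, W ω * (f (φ ω) : ℝ) ∂μ := by
        intro W hW0 hWmeas
        have hmeasg : AEStronglyMeasurable (fun x : ↥(Set.Icc (0:ℝ) 1) => (f x : ℝ))
            ((μ.withDensity fun ω => ENNReal.ofReal (W ω)).map φ) :=
          (NNReal.continuous_coe.comp f.continuous).aestronglyMeasurable
        rw [integral_map hφmeas.aemeasurable hmeasg]
        rw [show (μ.withDensity fun ω => ENNReal.ofReal (W ω))
            = μ.withDensity (fun ω => ((Real.toNNReal (W ω) : ℝ≥0) : ENNReal)) from rfl,
          integral_withDensity_eq_integral_smul (f := fun ω => Real.toNNReal (W ω))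
            (measurable_real_toNNReal.comp hWmeas) _]
        congr 1
        funext ω
        rw [NNReal.smul_def, Real.coe_toNNReal _ (hW0 ω), smul_eq_mul]
      refine (ENNReal.toReal_eq_toReal_iff'
        (BoundedContinuousFunction.lintegral_lt_top_of_nnreal _ f).ne
        (BoundedContinuousFunction.lintegral_lt_top_of_nnreal _ f).ne).mp ?_
      rw [BoundedContinuousFunction.toReal_lintegral_coe_eq_integral f _,
        BoundedContinuousFunction.toReal_lintegral_coe_eq_integral f _,
        hside X hX0 hXmeas, hside _ hcS0 (hSmeas.const_mul c)]
      exact claim ⟨fun x => (f x : ℝ), NNReal.continuous_coe.comp f.continuous⟩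
    have setint : ∀ B : Set ℝ, MeasurableSet B →
        ∫ ω in S ⁻¹' B, (c * S ω) ∂μ = ∫ ω in S ⁻¹' B, X ω ∂μ := by
      intro B hB
      have ginj : Function.Injective (fun s : ℝ => Real.exp (-s)) :=
        fun a b hab => by
          have := Real.exp_injective hab
          linarith [neg_injective this]
      have gmeas : Measurable (fun s : ℝ => Real.exp (-s)) :=
        Real.measurable_exp.comp measurable_neg
      have gemb : MeasurableEmbedding (fun s : ℝ => Real.exp (-s)) :=
        gmeas.measurableEmbedding ginj
      have hEmeas : MeasurableSet
          (Subtype.val ⁻¹' ((fun s : ℝ => Real.exp (-s)) '' B) : Set (Set.Icc (0:ℝ) 1)) :=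
        measurable_subtype_coe (gemb.measurableSet_image.mpr hB)
      have hpre : φ ⁻¹' (Subtype.val ⁻¹' ((fun s : ℝ => Real.exp (-s)) '' B)) = S ⁻¹' B := by
        ext ω
        simp only [Set.mem_preimage, hφ_def]
        exact ginj.mem_set_image
      have happ := congrArg (fun ν : Measure (Set.Icc (0:ℝ) 1) =>
        ν (Subtype.val ⁻¹' ((fun s : ℝ => Real.exp (-s)) '' B))) hρ
      rw [Measure.map_apply hφmeas hEmeas, Measure.map_apply hφmeas hEmeas, hpre,
        withDensity_apply _ (hSmeas hB), withDensity_apply _ (hSmeas hB)] at happ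
      have e1 : ENNReal.ofReal (∫ ω in S ⁻¹' B, X ω ∂μ)
          = ENNReal.ofReal (∫ ω in S ⁻¹' B, (c * S ω) ∂μ) := by
        rw [ofReal_integral_eq_lintegral_ofReal hXint.integrableOn
            (hX0ae.filter_mono (ae_mono Measure.restrict_le_self)),
          ofReal_integral_eq_lintegral_ofReal hcSint.integrableOn
            (hcS0ae.filter_mono (ae_mono Measure.restrict_le_self)),
          happ]
      exact ((ENNReal.ofReal_eq_ofReal_iff
        (setIntegral_nonneg (hSmeas hB) fun ω _ => hX0 ω)
        (setIntegral_nonneg (hSmeas hB) fun ω _ => hcS0 ω)).mp e1).symm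
    refine (ae_eq_condExp_of_forall_setIntegral_eq hm hXint ?_ ?_ ?_).symm
    · exact fun s _ _ => hcSint.integrableOn
    · rintro s ⟨B, hB, rfl⟩ -
      exact setint B hB
    · exact StronglyMeasurable.aestronglyMeasurable ((hSm.const_mul c).stronglyMeasurable)
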